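/- For reduced words u and v over the letter alphabet, u is always a ≼-predecessor-or-equal of the non-splitting reduct [u·v]; that is, u ≼ [u·v]. -/

import Mathlib

variable {V : Type*} [DecidableEq V] [Fintype V]

/-- A letter is a nonempty connected subset of the graph `G`
(connectedness of the induced subgraph includes nonemptiness). -/
def IsLetter (G : SimpleGraph V) (s : Finset V) : Prop :=
  (G.induce (↑s : Set V)).Connected

/-- The type of letters of `G`. -/
def Letter (G : SimpleGraph V) := {s : Finset V // IsLetter G s}

/-- A word is a finite sequence of letters. -/
abbrev Word (G : SimpleGraph V) := List (Letter G)

/-- Two letters commute iff their union is not a letter (is disconnected). -/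
def LCommute (G : SimpleGraph V) (s t : Letter G) : Prop :=
  ¬ IsLetter G (s.1 ∪ t.1)

/-- Two words commute if their letters pairwise commute. -/
def WCommute (G : SimpleGraph V) (u v : Word G) : Prop :=
  ∀ s ∈ u, ∀ t ∈ v, LCommute G s t

/-- One swap of two adjacent commuting letters. -/
def LSwapStep (G : SimpleGraph V) (w w' : Word G) : Prop :=
  ∃ (a b : Word G) (s t : Letter G), LCommute G s t ∧
    w = a ++ s :: t :: b ∧ w' = a ++ t :: s :: b

/-- Equivalence (`≈`) of words: sequences of swaps of adjacent commuting letters. -/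
def WEquiv (G : SimpleGraph V) : Word G → Word G → Prop :=
  Relation.ReflTransGen (LSwapStep G)

/-- A word is reduced if there is no pair of comparable letters such that the
smaller one commutes with all letters strictly in between. -/
def WIsReduced (G : SimpleGraph V) (w : Word G) : Prop :=
  ¬ ∃ (a b c : Word G) (s t : Letter G),
      w = a ++ s :: (b ++ t :: c) ∧
      ((s.1 ⊆ t.1 ∧ ∀ r ∈ b, LCommute G s r) ∨
       (t.1 ⊆ s.1 ∧ ∀ r ∈ b, LCommute G t r))

/-- A splitting of a letter `s`: a (possibly empty) word whose letters are
proper subsets of `s`. -/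
def IsSplitting (G : SimpleGraph V) (x : Word G) (s : Letter G) : Prop :=
  ∀ t ∈ x, t.1 ⊂ s.1

/-- `SplitStep G u v`: `u` is obtained from `v` by replacing one occurrence of a
letter by a splitting of it. -/
def SplitStep (G : SimpleGraph V) (u v : Word G) : Prop :=
  ∃ (a b x : Word G) (s : Letter G),
    v = a ++ s :: b ∧ IsSplitting G x s ∧ u = a ++ x ++ b

/-- One step of the splitting order up to equivalence. -/
def PrecStep (G : SimpleGraph V) (u v : Word G) : Prop :=
  ∃ u' v', WEquiv G v v' ∧ SplitStep G u' v' ∧ WEquiv G u u'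

/-- The splitting order `≺` on words. -/
def WPrec (G : SimpleGraph V) : Word G → Word G → Prop :=
  Relation.TransGen (PrecStep G)

/-- `u ≼ v` : `u ≺ v` or `u ≈ v`. -/
def WPreceq (G : SimpleGraph V) (u v : Word G) : Prop :=
  WPrec G u v ∨ WEquiv G u v

/-- Absorption: if `s ⊆ t`, replace a subword `s·t` (or `t·s`) by `t`. -/
def AbsorbStep (G : SimpleGraph V) (w w' : Word G) : Prop :=
  ∃ (a b : Word G) (s t : Letter G), s.1 ⊆ t.1 ∧
    (w = a ++ s :: t :: b ∨ w = a ++ t :: s :: b) ∧ w' = a ++ t :: b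

/-- A non-splitting reduction step: Commutation or Absorption. -/
def NSStep (G : SimpleGraph V) (w w' : Word G) : Prop :=
  LSwapStep G w w' ∨ AbsorbStep G w w'

/-- `NSRed G u v`: `v` is a non-splitting reduction of `u`, i.e. a reduced word
obtained from `u` by Commutation and Absorption steps only. -/
def NSRed (G : SimpleGraph V) (u v : Word G) : Prop :=
  Relation.ReflTransGen (NSStep G) u v ∧ WIsReduced G v

/-- The letter `t` is left-absorbed by the word `w`: `t` is contained in some
letter of `w` and commutes with all earlier letters. -/
def LetterLeftAbsorbed (G : SimpleGraph V) (t : Letter G) (w : Word G) : Prop :=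
  ∃ (a b : Word G) (s : Letter G), w = a ++ s :: b ∧ t.1 ⊆ s.1 ∧ ∀ r ∈ a, LCommute G t r

/-- The letter `t` is right-absorbed by the word `w`. -/
def LetterRightAbsorbed (G : SimpleGraph V) (t : Letter G) (w : Word G) : Prop :=
  ∃ (a b : Word G) (s : Letter G), w = a ++ s :: b ∧ t.1 ⊆ s.1 ∧ ∀ r ∈ b, LCommute G t r

/-- The letter `t` is properly left-absorbed by the word `w`. -/
def LetterProperLeftAbsorbed (G : SimpleGraph V) (t : Letter G) (w : Word G) : Prop :=
  ∃ (a b : Word G) (s : Letter G), w = a ++ s :: b ∧ t.1 ⊂ s.1 ∧ ∀ r ∈ a, LCommute G t r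

/-- The letter `t` is properly right-absorbed by the word `w`. -/
def LetterProperRightAbsorbed (G : SimpleGraph V) (t : Letter G) (w : Word G) : Prop :=
  ∃ (a b : Word G) (s : Letter G), w = a ++ s :: b ∧ t.1 ⊂ s.1 ∧ ∀ r ∈ b, LCommute G t r

/-- A word `u` is left-absorbed by `w` if each of its letters is. -/
def LeftAbsorbed (G : SimpleGraph V) (u w : Word G) : Prop :=
  ∀ t ∈ u, LetterLeftAbsorbed G t w

/-- A word `u` is right-absorbed by `w` if each of its letters is. -/
def RightAbsorbed (G : SimpleGraph V) (u w : Word G) : Prop :=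
  ∀ t ∈ u, LetterRightAbsorbed G t w

/-- A word `u` is properly left-absorbed by `w` if each of its letters is. -/
def ProperLeftAbsorbed (G : SimpleGraph V) (u w : Word G) : Prop :=
  ∀ t ∈ u, LetterProperLeftAbsorbed G t w

/-- A word `u` is properly right-absorbed by `w` if each of its letters is. -/
def ProperRightAbsorbed (G : SimpleGraph V) (u w : Word G) : Prop :=
  ∀ t ∈ u, LetterProperRightAbsorbed G t w

/-- A commuting word: its letters pairwise commute. -/
def IsCommuting (G : SimpleGraph V) (u : Word G) : Prop :=
  List.Pairwise (LCommute G) u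

/-- The letter `s` is an end of the word `u` if `u ≈ v·s` for some `v`. -/
def IsEnd (G : SimpleGraph V) (s : Letter G) (u : Word G) : Prop :=
  ∃ v, WEquiv G u (v ++ [s])

/-- `t` is the final segment of `u`: the commuting word consisting of all ends of `u`. -/
def IsFinalSegment (G : SimpleGraph V) (t u : Word G) : Prop :=
  IsCommuting G t ∧ ∀ s, s ∈ t ↔ IsEnd G s u

/-! ### Auxiliary development -/

set_option linter.unusedSectionVars false

section Aux

variable {G : SimpleGraph V}

lemma Letter.nonempty (s : Letter G) : s.1.Nonempty := by
  obtain ⟨⟨x, hx⟩⟩ := s.2.nonempty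
  exact ⟨x, by simpa using hx⟩

lemma lcommute_symm {s t : Letter G} (h : LCommute G s t) : LCommute G t s := by
  unfold LCommute at *
  rwa [Finset.union_comm]

lemma lcommute_mono {s t r : Letter G} (h : LCommute G s r) (hsub : t.1 ⊆ s.1) :
    LCommute G t r := by
  intro hcon
  apply h
  have e : (s.1 ∪ (t.1 ∪ r.1)) = s.1 ∪ r.1 := by
    rw [← Finset.union_assoc, Finset.union_eq_left.mpr hsub]
  obtain ⟨x, hx⟩ := Letter.nonempty t
  have : IsLetter G (s.1 ∪ (t.1 ∪ r.1)) := by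
    unfold IsLetter
    rw [Finset.coe_union]
    exact SimpleGraph.induce_union_connected (SimpleGraph.Connected.preconnected s.2) (SimpleGraph.Connected.preconnected hcon)
      ⟨x, by simpa using hsub hx, by simp [hx]⟩
  rwa [e] at this

lemma lcommute_mono' {s t r : Letter G} (h : LCommute G s r) (hsub : t.1 ⊆ r.1) :
    LCommute G s t :=
  lcommute_symm (lcommute_mono (lcommute_symm h) hsub)

lemma not_lcommute_of_subset {s t : Letter G} (h : s.1 ⊆ t.1) : ¬ LCommute G s t := by
  intro hc
  apply hc
  have : s.1 ∪ t.1 = t.1 := Finset.union_eq_right.mpr h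
  rw [this]
  exact t.2

/-! #### WEquiv basics -/

lemma lswap_symm {w w' : Word G} (h : LSwapStep G w w') : LSwapStep G w' w := by
  obtain ⟨a, b, s, t, hc, rfl, rfl⟩ := h
  exact ⟨a, b, t, s, lcommute_symm hc, rfl, rfl⟩

lemma wequiv_refl (w : Word G) : WEquiv G w w := Relation.ReflTransGen.refl

lemma wequiv_trans {u v w : Word G} (h1 : WEquiv G u v) (h2 : WEquiv G v w) :
    WEquiv G u w := Relation.ReflTransGen.trans h1 h2

lemma wequiv_symm {u v : Word G} (h : WEquiv G u v) : WEquiv G v u :=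
  by
    haveI : Std.Symm (LSwapStep G) := ⟨fun _ _ => lswap_symm⟩
    exact (Relation.ReflTransGen.symmetric (r := LSwapStep G)).symm _ _ h

lemma lswap_append {x y : Word G} (h : LSwapStep G x y) (A B : Word G) :
    LSwapStep G (A ++ x ++ B) (A ++ y ++ B) := by
  obtain ⟨a, b, s, t, hc, rfl, rfl⟩ := h
  exact ⟨A ++ a, b ++ B, s, t, hc, by simp, by simp⟩

lemma wequiv_append {x y : Word G} (h : WEquiv G x y) (A B : Word G) :
    WEquiv G (A ++ x ++ B) (A ++ y ++ B) := by
  induction h with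
  | refl => exact wequiv_refl _
  | tail _ hstep ih => exact Relation.ReflTransGen.tail ih (lswap_append hstep A B)

lemma wequiv_cons {x y : Word G} (c : Letter G) (h : WEquiv G x y) :
    WEquiv G (c :: x) (c :: y) := by
  have := wequiv_append h [c] []
  simpa using this

lemma wequiv_move {p : Letter G} {y : Word G} (h : ∀ q ∈ y, LCommute G p q) :
    WEquiv G (p :: y) (y ++ [p]) := by
  induction y with
  | nil => exact wequiv_refl _
  | cons q y' ih =>
      have hstep : LSwapStep G (p :: q :: y') (q :: p :: y') :=
        ⟨[], y', p, q, h q (by simp), rfl, rfl⟩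
      have h2 : WEquiv G (q :: (p :: y')) (q :: (y' ++ [p])) :=
        wequiv_cons q (ih (fun q hq => h q (by simp [hq])))
      exact Relation.ReflTransGen.head hstep h2

lemma wequiv_blocks_comm {x y : Word G} (h : ∀ p ∈ x, ∀ q ∈ y, LCommute G p q) :
    WEquiv G (x ++ y) (y ++ x) := by
  induction x with
  | nil => simpa using wequiv_refl y
  | cons p x' ih =>
      have h1 : WEquiv G (p :: (x' ++ y)) (p :: (y ++ x')) :=
        wequiv_cons p (ih (fun p hp => h p (by simp [hp])))
      have h2 : WEquiv G ((p :: y) ++ x') (( y ++ [p]) ++ x') := by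
        have := wequiv_append (wequiv_move (h p (by simp))) [] x'
        simpa using this
      have h3 : WEquiv G (p :: (y ++ x')) (y ++ p :: x') := by
        have : (p :: y) ++ x' = p :: (y ++ x') := by simp
        rw [← this]
        have e2 : (y ++ [p]) ++ x' = y ++ p :: x' := by simp
        rw [← e2]
        exact h2
      exact wequiv_trans h1 h3

/-! #### getElem helpers -/

lemma getElem_append_cons_self {α : Type*} (A : List α) (x : α) (B : List α) :
    (A ++ x :: B)[A.length]'(by simp) = x := by
  rw [List.getElem_append_right (le_refl _)]
  simp

lemma getElem_append_cons_lt {α : Type*} (A : List α) (x : α) (B : List α)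
    {k : ℕ} (hk : k < A.length) :
    (A ++ x :: B)[k]'(by simp; omega) = A[k] := by
  rw [List.getElem_append_left hk]

/-! #### The "bad pattern" witness for non-reducedness, in index form -/

/-- Index form of the non-reducedness pattern: positions `i < j` and a letter `p`
equal to one of the two endpoints, contained in both, commuting with everything
strictly between. -/
def BadW (G : SimpleGraph V) (w : Word G) : Prop :=
  ∃ (i j : ℕ) (hi : i < w.length) (hj : j < w.length), i < j ∧
    ∃ p : Letter G, (p = w[i] ∨ p = w[j]) ∧ p.1 ⊆ (w[i]).1 ∧ p.1 ⊆ (w[j]).1 ∧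
      ∀ (k : ℕ) (hk : k < w.length), i < k → k < j → LCommute G p (w[k])

lemma badW_adj {p q : Letter G} (A B : Word G) (h : p.1 ⊆ q.1 ∨ q.1 ⊆ p.1) :
    BadW G (A ++ p :: q :: B) := by
  have hi : A.length < (A ++ p :: q :: B).length := by simp
  have hj : A.length + 1 < (A ++ p :: q :: B).length := by simp
  have e1 : (A ++ p :: q :: B)[A.length]'hi = p := getElem_append_cons_self A p _
  have e2 : (A ++ p :: q :: B)[A.length + 1]'hj = q := by
    rw [List.getElem_append_right (by omega : A.length ≤ A.length + 1)]
    simp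
  refine ⟨A.length, A.length + 1, hi, hj, by omega, ?_⟩
  rcases h with h | h
  · exact ⟨p, Or.inl e1.symm, by rw [e1], by rw [e2]; exact h,
      fun k hk h1 h2 => by omega⟩
  · exact ⟨q, Or.inr e2.symm, by rw [e1]; exact h, by rw [e2],
      fun k hk h1 h2 => by omega⟩

lemma badW_not_reduced {w : Word G} (h : BadW G w) : ¬ WIsReduced G w := by
  obtain ⟨i, j, hi, hj, hij, p, hp, hpi, hpj, hmid⟩ := h
  intro hred
  apply hred
  obtain ⟨n, rfl⟩ : ∃ n, j = i + 1 + n := ⟨j - i - 1, by omega⟩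
  set d := w.drop (i + 1) with hd
  have hdl : d.length = w.length - (i + 1) := by simp [hd]
  have hnd : n < d.length := by omega
  have e0 : w = w.take i ++ w[i] :: d := by
    conv_lhs => rw [← List.take_append_drop i w]
    rw [hd, List.drop_eq_getElem_cons hi]
  have ed : d = d.take n ++ d[n] :: d.drop (n + 1) := by
    conv_lhs => rw [← List.take_append_drop n d]
    rw [List.drop_eq_getElem_cons hnd]
  have edn : d[n]'hnd = w[i + 1 + n]'hj := by
    simp [hd]
  have hmem : ∀ r ∈ d.take n, ∃ (k : ℕ) (hk : k < w.length),
      i < k ∧ k < i + 1 + n ∧ r = w[k] := by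
    intro r hr
    rw [List.mem_iff_getElem] at hr
    obtain ⟨k, hk, rfl⟩ := hr
    have hk' : k < n := by
      have := hk
      simp only [List.length_take] at this
      omega
    refine ⟨i + 1 + k, by omega, by omega, by omega, ?_⟩
    rw [List.getElem_take]
    simp [hd]
  refine ⟨w.take i, d.take n, d.drop (n + 1), w[i], w[i+1+n], ?_, ?_⟩
  · conv_lhs => rw [e0]
    rw [← edn, ← ed]
  · rcases hp with hp | hp
    · left
      refine ⟨by rw [← hp]; exact hpj, fun r hr => ?_⟩
      obtain ⟨k, hk, h1, h2, rfl⟩ := hmem r hr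
      rw [← hp]
      exact hmid k hk h1 h2
    · right
      refine ⟨by rw [← hp]; exact hpi, fun r hr => ?_⟩
      obtain ⟨k, hk, h1, h2, rfl⟩ := hmem r hr
      rw [← hp]
      exact hmid k hk h1 h2

lemma getElem_append_cons2_ge {α : Type*} (A : List α) (x y : α) (B : List α) {k : ℕ}
    (hk2 : k < (A ++ x :: y :: B).length) (hk : A.length + 2 ≤ k) :
    (A ++ x :: y :: B)[k] = B[k - A.length - 2]'(by simp at hk2 ⊢; omega) := by
  rw [List.getElem_append_right (by omega : A.length ≤ k)]
  obtain ⟨m, hm⟩ : ∃ m, k - A.length = m + 2 := ⟨k - A.length - 2, by omega⟩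
  simp only [hm]
  simp only [List.getElem_cons_succ]
  first
  | rfl
  | (congr 1; omega)

lemma lswap_facts {w w' : Word G} (h : LSwapStep G w w') :
    ∃ (n : ℕ) (hn : n + 1 < w.length) (hl : w'.length = w.length),
      LCommute G (w[n]'(by omega)) (w[n+1]'hn) ∧
      w'[n]'(by omega) = w[n+1]'hn ∧
      w'[n+1]'(by omega) = w[n]'(by omega) ∧
      ∀ (k : ℕ) (hk : k < w.length), k ≠ n → k ≠ n + 1 →
        w'[k]'(by omega) = w[k]'hk := by
  obtain ⟨a, b, s, t, hc, rfl, rfl⟩ := h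
  have hn : a.length + 1 < (a ++ s :: t :: b).length := by simp
  have hl : (a ++ t :: s :: b).length = (a ++ s :: t :: b).length := by simp
  have ew0 : (a ++ s :: t :: b)[a.length]'(by omega) = s := getElem_append_cons_self a s _
  have ew1 : (a ++ s :: t :: b)[a.length + 1]'hn = t := by
    rw [List.getElem_append_right (by omega : a.length ≤ a.length + 1)]
    simp
  have ew0' : (a ++ t :: s :: b)[a.length]'(by simp) = t := getElem_append_cons_self a t _
  have ew1' : (a ++ t :: s :: b)[a.length + 1]'(by simp) = s := by
    rw [List.getElem_append_right (by omega : a.length ≤ a.length + 1)]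
    simp
  refine ⟨a.length, hn, hl, by rw [ew0, ew1]; exact hc, by rw [ew0', ew1], by rw [ew1', ew0],
    fun k hk h1 h2 => ?_⟩
  rcases lt_or_ge k a.length with hlt | hge
  · rw [getElem_append_cons_lt a t _ hlt, getElem_append_cons_lt a s _ hlt]
  · have hge2 : a.length + 2 ≤ k := by omega
    rw [getElem_append_cons2_ge a t s b (by omega) hge2,
      getElem_append_cons2_ge a s t b hk hge2]

lemma badW_swap {w w' : Word G} (hs : LSwapStep G w w') (h : BadW G w) : BadW G w' := by
  obtain ⟨n, hn, hl, hcomm, e0, e1, ek⟩ := lswap_facts hs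
  obtain ⟨i, j, hi, hj, hij, p, hp, hpi, hpj, hmid⟩ := h
  -- case i = n, j = n + 1 is impossible
  by_cases hF : i = n ∧ j = n + 1
  · exfalso
    obtain ⟨rfl, rfl⟩ := hF
    exact not_lcommute_of_subset hpj (lcommute_mono hcomm hpi)
  rcases not_and_or.mp hF with hF' | hF'
  all_goals {
  -- transposition of indices
  have key : ∀ (m : ℕ) (hm : m < w.length), ∃ (m' : ℕ) (hm' : m' < w.length),
      w'[m']'(by omega) = w[m]'hm ∧
      ((m ≠ n ∧ m ≠ n + 1 ∧ m' = m) ∨ (m = n ∧ m' = n + 1) ∨ (m = n + 1 ∧ m' = n)) := by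
    intro m hm
    by_cases h1 : m = n
    · subst h1
      exact ⟨m + 1, by omega, e1, Or.inr (Or.inl ⟨rfl, rfl⟩)⟩
    by_cases h2 : m = n + 1
    · subst h2
      exact ⟨n, by omega, e0, Or.inr (Or.inr ⟨rfl, rfl⟩)⟩
    · exact ⟨m, hm, ek m hm h1 h2, Or.inl ⟨h1, h2, rfl⟩⟩
  obtain ⟨i', hi', ei', hcasei⟩ := key i hi
  obtain ⟨j', hj', ej', hcasej⟩ := key j hj
  have hij' : i' < j' := by
    rcases hcasei with ⟨_, _, rfl⟩ | ⟨hin, rfl⟩ | ⟨hin, rfl⟩ <;>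
      rcases hcasej with ⟨hj1, hj2, rfl⟩ | ⟨hjn, rfl⟩ | ⟨hjn, rfl⟩ <;> omega
  refine ⟨i', j', by omega, by omega, hij', p, ?_, by rw [ei']; exact hpi,
    by rw [ej']; exact hpj, ?_⟩
  · rcases hp with rfl | rfl
    · exact Or.inl (by rw [ei'])
    · exact Or.inr (by rw [ej'])
  · intro k hk h1 h2
    have hkw : k < w.length := by omega
    by_cases hk1 : k = n
    · -- w'[n] = w[n+1]
      subst hk1
      have ev : w'[k]'hk = w[k+1]'(by omega) := e0
      rw [ev]
      by_cases hj2 : j = k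
      · -- the element w[k+1] is the (moved) other element of the swap
        obtain rfl := hj2
        exact lcommute_mono hcomm hpj
      · have hc1 : i < k + 1 := by
          rcases hcasei with ⟨_, _, rfl⟩ | ⟨hin, rfl⟩ | ⟨hin, rfl⟩ <;> omega
        have hc2 : k + 1 < j := by
          rcases hcasej with ⟨hja, hjb, rfl⟩ | ⟨hjn, rfl⟩ | ⟨hjn, rfl⟩ <;> omega
        exact hmid (k+1) (by omega) hc1 hc2
    by_cases hk2 : k = n + 1
    · subst hk2
      have ev : w'[n+1]'hk = w[n]'(by omega) := e1
      rw [ev]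
      by_cases hi2 : i = n + 1
      · obtain rfl := hi2
        exact lcommute_symm (lcommute_mono' hcomm hpi)
      · have hc1 : i < n := by
          rcases hcasei with ⟨hia, hib, rfl⟩ | ⟨hin, rfl⟩ | ⟨hin, rfl⟩ <;> omega
        have hc2 : n < j := by
          rcases hcasej with ⟨hja, hjb, rfl⟩ | ⟨hjn, rfl⟩ | ⟨hjn, rfl⟩ <;> omega
        exact hmid n (by omega) hc1 hc2
    · have ev : w'[k]'hk = w[k]'hkw := ek k hkw hk1 hk2
      rw [ev]
      have hc1 : i < k := by
        rcases hcasei with ⟨_, _, rfl⟩ | ⟨hin, rfl⟩ | ⟨hin, rfl⟩ <;> omega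
      have hc2 : k < j := by
        rcases hcasej with ⟨_, _, rfl⟩ | ⟨hjn, rfl⟩ | ⟨hjn, rfl⟩ <;> omega
      exact hmid k hkw hc1 hc2
  }

lemma badW_equiv {u m : Word G} (h : WEquiv G u m) (hb : BadW G m) : BadW G u := by
  induction h with
  | refl => exact hb
  | tail _ hstep ih => exact ih (badW_swap (lswap_symm hstep) hb)

lemma reduced_contra {u : Word G} (hu : WIsReduced G u) {p q : Letter G} {A B : Word G}
    (h : WEquiv G u (A ++ p :: q :: B)) (hc : p.1 ⊆ q.1 ∨ q.1 ⊆ p.1) : False :=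
  badW_not_reduced (badW_equiv h (badW_adj A B hc)) hu

end Aux

/-- A block for a letter `s`: either the singleton `[s]` or a splitting of `s`. -/
def BlockRel (G : SimpleGraph V) (x : Word G) (s : Letter G) : Prop :=
  x = [s] ∨ IsSplitting G x s

/-- `u` is equivalent to a word obtained from `w` by replacing each letter either
by itself or by a splitting of it. -/
def CharW (G : SimpleGraph V) (u w : Word G) : Prop :=
  ∃ xs : List (Word G), List.Forall₂ (BlockRel G) xs w ∧ WEquiv G u xs.flatten

section Aux2

variable {G : SimpleGraph V}

lemma block_subset {x : Word G} {s : Letter G} (h : BlockRel G x s) {t : Letter G}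
    (ht : t ∈ x) : t.1 ⊆ s.1 := by
  rcases h with rfl | h
  · simp only [List.mem_singleton] at ht
    subst ht; rfl
  · exact (h t ht).subset

lemma forall₂_split {α β : Type*} {R : α → β → Prop} {l : List α} {a b : List β}
    (h : List.Forall₂ R l (a ++ b)) :
    ∃ la lb, l = la ++ lb ∧ List.Forall₂ R la a ∧ List.Forall₂ R lb b :=
  ⟨l.take a.length, l.drop a.length, (List.take_append_drop _ _).symm,
    List.forall₂_take_append l a b h, List.forall₂_drop_append l a b h⟩

lemma char_init (u v : Word G) : CharW G u (u ++ v) := by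
  refine ⟨u.map (fun s => [s]) ++ v.map (fun _ => ([] : Word G)), ?_, ?_⟩
  · apply List.rel_append
    · induction u with
      | nil => exact List.Forall₂.nil
      | cons s u' ih => exact List.Forall₂.cons (Or.inl rfl) ih
    · induction v with
      | nil => exact List.Forall₂.nil
      | cons s v' ih =>
          exact List.Forall₂.cons (Or.inr (fun t ht => absurd ht List.not_mem_nil)) ih
  · have e1 : ∀ (w : Word G), (w.map (fun s => [s])).flatten = w := by
      intro w; induction w with
      | nil => rfl
      | cons s w' ih => simp [ih]
    have e2 : ∀ (w : Word G), (w.map (fun _ => ([] : Word G))).flatten = [] := by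
      intro w; induction w with
      | nil => rfl
      | cons s w' ih => simp [ih]
    rw [List.flatten_append, e1, e2, List.append_nil]
    exact wequiv_refl u

lemma char_swap {u w w' : Word G} (hs : LSwapStep G w w') (h : CharW G u w) :
    CharW G u w' := by
  obtain ⟨a, b, s, t, hc, rfl, rfl⟩ := hs
  obtain ⟨xs, hf, he⟩ := h
  obtain ⟨xa, rest, rfl, hfa, hrest⟩ := forall₂_split hf
  obtain ⟨xS, rest1, hxS, hrest1, rfl⟩ := List.forall₂_cons_right_iff.mp hrest
  obtain ⟨xT, xb, hxT, hfb, rfl⟩ := List.forall₂_cons_right_iff.mp hrest1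
  refine ⟨xa ++ xT :: xS :: xb,
    List.rel_append hfa (List.Forall₂.cons hxT (List.Forall₂.cons hxS hfb)), ?_⟩
  have hpairs : ∀ p ∈ xS, ∀ q ∈ xT, LCommute G p q := fun p hp q hq =>
    lcommute_mono' (lcommute_mono hc (block_subset hxS hp)) (block_subset hxT hq)
  have hmove := wequiv_append (wequiv_blocks_comm hpairs) xa.flatten xb.flatten
  refine wequiv_trans he ?_
  simp only [List.flatten_append, List.flatten_cons, ← List.append_assoc] at hmove ⊢
  exact hmove

lemma splitting_glue {x y : Word G} {s t : Letter G} (hx : IsSplitting G x s)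
    (hy : IsSplitting G y t) (hst : s.1 ⊆ t.1) : IsSplitting G (x ++ y) t := by
  intro r hr
  rcases List.mem_append.mp hr with hr | hr
  · exact ssubset_of_ssubset_of_subset (hx r hr) hst
  · exact hy r hr

lemma char_absorb {u w w' : Word G} (hu : WIsReduced G u) (ha : AbsorbStep G w w')
    (h : CharW G u w) : CharW G u w' := by
  obtain ⟨a, b, s, t, hst, hor, rfl⟩ := ha
  rcases hor with rfl | rfl
  · -- w = a ++ s :: t :: b
    obtain ⟨xs, hf, he⟩ := h
    obtain ⟨xa, rest, rfl, hfa, hrest⟩ := forall₂_split hf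
    obtain ⟨xS, rest1, hxS, hrest1, rfl⟩ := List.forall₂_cons_right_iff.mp hrest
    obtain ⟨xT, xb, hxT, hfb, rfl⟩ := List.forall₂_cons_right_iff.mp hrest1
    simp only [List.flatten_append, List.flatten_cons, ← List.append_assoc] at he
    -- he : WEquiv u (xa.flatten ++ xS ++ xT ++ xb.flatten)
    rcases hxS with rfl | hspS <;> rcases hxT with rfl | hspT
    · exact absurd (by simpa [List.append_assoc] using he)
        (fun h' => reduced_contra hu h' (Or.inl hst))
    · -- xS = [s], xT a splitting of t
      by_cases heq : s.1 = t.1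
      · have hts : s = t := Subtype.ext heq
        subst hts
        cases xT with
        | nil =>
            refine ⟨xa ++ [s] :: xb, List.rel_append hfa (List.Forall₂.cons (Or.inl rfl) hfb), ?_⟩
            simp only [List.flatten_append, List.flatten_cons, ← List.append_assoc]
            simpa using he
        | cons t' rest' =>
            exfalso
            refine reduced_contra hu (A := xa.flatten) (B := rest' ++ xb.flatten)
              (p := s) (q := t') ?_ (Or.inr (hspT t' (by simp)).subset)
            simpa [List.append_assoc] using he
      · have hlt : s.1 ⊂ t.1 := Finset.ssubset_iff_subset_ne.mpr ⟨hst, heq⟩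
        refine ⟨xa ++ (s :: xT) :: xb, List.rel_append hfa
          (List.Forall₂.cons (Or.inr ?_) hfb), ?_⟩
        · intro r hr
          rcases List.mem_cons.mp hr with rfl | hr
          · exact hlt
          · exact hspT r hr
        · simp only [List.flatten_append, List.flatten_cons, ← List.append_assoc]
          simpa [List.append_assoc] using he
    · -- xS splitting, xT = [t]
      rcases List.eq_nil_or_concat xS with rfl | ⟨q, s', rfl⟩
      · refine ⟨xa ++ [t] :: xb, List.rel_append hfa (List.Forall₂.cons (Or.inl rfl) hfb), ?_⟩
        simp only [List.flatten_append, List.flatten_cons, ← List.append_assoc]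
        simpa using he
      · exfalso
        refine reduced_contra hu (A := xa.flatten ++ q) (B := xb.flatten)
          (p := s') (q := t) ?_
          (Or.inl (ssubset_of_ssubset_of_subset (hspS s' (by simp)) hst).subset)
        simpa [List.append_assoc] using he
    · -- both splittings
      refine ⟨xa ++ (xS ++ xT) :: xb, List.rel_append hfa
        (List.Forall₂.cons (Or.inr (splitting_glue hspS hspT hst)) hfb), ?_⟩
      simp only [List.flatten_append, List.flatten_cons, ← List.append_assoc]
      exact he
  · -- w = a ++ t :: s :: b
    obtain ⟨xs, hf, he⟩ := h
    obtain ⟨xa, rest, rfl, hfa, hrest⟩ := forall₂_split hf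
    obtain ⟨xT, rest1, hxT, hrest1, rfl⟩ := List.forall₂_cons_right_iff.mp hrest
    obtain ⟨xS, xb, hxS, hfb, rfl⟩ := List.forall₂_cons_right_iff.mp hrest1
    simp only [List.flatten_append, List.flatten_cons, ← List.append_assoc] at he
    rcases hxS with rfl | hspS <;> rcases hxT with rfl | hspT
    · exact absurd (by simpa [List.append_assoc] using he)
        (fun h' => reduced_contra hu h' (Or.inr hst))
    · -- xS = [s], xT splitting of t
      by_cases heq : s.1 = t.1
      · have hts : s = t := Subtype.ext heq
        subst hts
        rcases List.eq_nil_or_concat xT with rfl | ⟨qq, t', rfl⟩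
        · refine ⟨xa ++ [s] :: xb, List.rel_append hfa (List.Forall₂.cons (Or.inl rfl) hfb), ?_⟩
          simp only [List.flatten_append, List.flatten_cons, ← List.append_assoc]
          simpa using he
        · exfalso
          refine reduced_contra hu (A := xa.flatten ++ qq) (B := xb.flatten)
            (p := t') (q := s) ?_ (Or.inl (hspT t' (by simp)).subset)
          simpa [List.append_assoc] using he
      · have hlt : s.1 ⊂ t.1 := Finset.ssubset_iff_subset_ne.mpr ⟨hst, heq⟩
        refine ⟨xa ++ (xT ++ [s]) :: xb, List.rel_append hfa
          (List.Forall₂.cons (Or.inr ?_) hfb), ?_⟩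
        · intro r hr
          rcases List.mem_append.mp hr with hr | hr
          · exact hspT r hr
          · simp only [List.mem_singleton] at hr
            subst hr; exact hlt
        · simp only [List.flatten_append, List.flatten_cons, ← List.append_assoc]
          simpa [List.append_assoc] using he
    · -- xS splitting, xT = [t]
      cases xS with
      | nil =>
          refine ⟨xa ++ [t] :: xb, List.rel_append hfa (List.Forall₂.cons (Or.inl rfl) hfb), ?_⟩
          simp only [List.flatten_append, List.flatten_cons, ← List.append_assoc]
          simpa using he
      | cons s' rest' =>
          exfalso
          refine reduced_contra hu (A := xa.flatten) (B := rest' ++ xb.flatten)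
            (p := t) (q := s') ?_
            (Or.inr (ssubset_of_ssubset_of_subset (hspS s' (by simp)) hst).subset)
          simpa [List.append_assoc] using he
    · refine ⟨xa ++ (xT ++ xS) :: xb, List.rel_append hfa
        (List.Forall₂.cons (Or.inr ?_) hfb), ?_⟩
      · intro r hr
        rcases List.mem_append.mp hr with hr | hr
        · exact hspT r hr
        · exact ssubset_of_ssubset_of_subset (hspS r hr) hst
      · simp only [List.flatten_append, List.flatten_cons, ← List.append_assoc]
        exact he

/-! #### From `CharW` to `WPreceq` -/

lemma precStep_congr_left {u u' w : Word G} (h : WEquiv G u u') (hp : PrecStep G u' w) :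
    PrecStep G u w := by
  obtain ⟨a, b, hv, hs, hu⟩ := hp
  exact ⟨a, b, hv, hs, wequiv_trans h hu⟩

lemma precStep_congr_right {u w w' : Word G} (hp : PrecStep G u w) (h : WEquiv G w w') :
    PrecStep G u w' := by
  obtain ⟨a, b, hv, hs, hu⟩ := hp
  exact ⟨a, b, wequiv_trans (wequiv_symm h) hv, hs, hu⟩

lemma wprec_congr_left {u u' w : Word G} (h : WEquiv G u u') (hp : WPrec G u' w) :
    WPrec G u w := by
  induction hp with
  | single hs => exact Relation.TransGen.single (precStep_congr_left h hs)
  | tail _ hs ih => exact Relation.TransGen.tail ih hs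

lemma wprec_congr_right {u w w' : Word G} (hp : WPrec G u w) (h : WEquiv G w w') :
    WPrec G u w' := by
  induction hp with
  | single hs => exact Relation.TransGen.single (precStep_congr_right hs h)
  | tail h1 hs => exact Relation.TransGen.tail h1 (precStep_congr_right hs h)

lemma wpreceq_congr_left {u u' w : Word G} (h : WEquiv G u u') (hp : WPreceq G u' w) :
    WPreceq G u w := by
  rcases hp with hp | hp
  · exact Or.inl (wprec_congr_left h hp)
  · exact Or.inr (wequiv_trans h hp)

lemma wprec_preceq_trans {u w r : Word G} (h1 : WPrec G u w) (h2 : WPreceq G w r) :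
    WPrec G u r := by
  rcases h2 with h2 | h2
  · exact Relation.TransGen.trans h1 h2
  · exact wprec_congr_right h1 h2

lemma precStep_cons (c : Letter G) {u w : Word G} (h : PrecStep G u w) :
    PrecStep G (c :: u) (c :: w) := by
  obtain ⟨u', v', hv, ⟨A, B, X, S, rfl, hsp, rfl⟩, hu⟩ := h
  exact ⟨c :: (A ++ X ++ B), c :: (A ++ S :: B), wequiv_cons c hv,
    ⟨c :: A, B, X, S, rfl, hsp, by simp⟩, wequiv_cons c hu⟩

lemma wprec_cons (c : Letter G) {u w : Word G} (h : WPrec G u w) :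
    WPrec G (c :: u) (c :: w) := by
  induction h with
  | single hs => exact Relation.TransGen.single (precStep_cons c hs)
  | tail _ hs ih => exact Relation.TransGen.tail ih (precStep_cons c hs)

lemma wpreceq_cons (c : Letter G) {u w : Word G} (h : WPreceq G u w) :
    WPreceq G (c :: u) (c :: w) := by
  rcases h with h | h
  · exact Or.inl (wprec_cons c h)
  · exact Or.inr (wequiv_cons c h)

lemma flatten_preceq : ∀ {w : Word G} {xs : List (Word G)},
    List.Forall₂ (BlockRel G) xs w → WPreceq G xs.flatten w := by
  intro w xs h
  induction h with
  | nil => exact Or.inr (wequiv_refl [])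
  | @cons x c xs' w' hx _ ih =>
      rcases hx with rfl | hx
      · simpa using wpreceq_cons c ih
      · have h1 : PrecStep G (x ++ xs'.flatten) (c :: xs'.flatten) :=
          ⟨x ++ xs'.flatten, c :: xs'.flatten, wequiv_refl _,
            ⟨[], xs'.flatten, x, c, rfl, hx, by simp⟩, wequiv_refl _⟩
        have h2 : WPreceq G (c :: xs'.flatten) (c :: w') := wpreceq_cons c ih
        exact Or.inl (wprec_preceq_trans (Relation.TransGen.single h1) h2)

lemma char_preceq {u w : Word G} (h : CharW G u w) : WPreceq G u w := by
  obtain ⟨xs, hf, he⟩ := h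
  exact wpreceq_congr_left he (flatten_preceq hf)

end Aux2

/-- For reduced words `u` and `v`, always `u ≼ [u·v]`. -/
theorem preceq_nonsplitting_reduct (G : SimpleGraph V) (u v : Word G)
    (hu : WIsReduced G u) (hv : WIsReduced G v) :
    ∀ r, NSRed G (u ++ v) r → WPreceq G u r := by
  intro r hr
  obtain ⟨hsteps, -⟩ := hr
  have key : CharW G u r := by
    clear hv
    induction hsteps with
    | refl => exact char_init u v
    | tail _ hstep ih =>
        rcases hstep with hstep | hstep
        · exact char_swap hstep ih
        · exact char_absorb hu hstep ih
  exact char_preceq key
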